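/- The function v̄_m(t,x) = α_m cos(ω_m t) e_m(x) with α_m = ±√(4ω_m/3), ω_m = m+1, e_m(x) = sin((m+1)x)/sin(x), solves the resonant system A v = Π_V(v³), i.e., α_m ω_m² cos(ω_m t) e_m(x) = Π_V(v̄_m³), where Π_V is the L²-orthogonal projection onto the kernel V of -∂_tt - A. -/

import Mathlib

/-- The spherically symmetric eigenfunctions `e_j(x) = sin((j+1)x)/sin x` on `(0,π)`. -/
noncomputable def sphEig (j : ℕ) (x : ℝ) : ℝ := Real.sin (((j : ℝ) + 1) * x) / Real.sin x

open Real MeasureTheory intervalIntegral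

lemma sin_sq_sub (A B : ℝ) : Real.sin A ^ 2 - Real.sin B ^ 2 = Real.sin (A+B) * Real.sin (A-B) := by
  rw [Real.sin_add, Real.sin_sub]
  nlinarith [Real.sin_sq_add_cos_sq A, Real.sin_sq_add_cos_sq B]

lemma sin_pow_four (θ : ℝ) : Real.sin θ ^ 4 = Real.sin θ ^ 2 - (1/4) * Real.sin (2*θ) ^ 2 := by
  rw [Real.sin_two_mul]
  nlinarith [Real.sin_sq_add_cos_sq θ]

lemma sin_cube_mul (θ : ℝ) : Real.sin θ ^ 3 * Real.sin (3*θ) =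
    (3 * Real.sin (2*θ)^2 - 3 * Real.sin θ ^2 - Real.sin (3*θ)^2)/4 := by
  rw [Real.sin_three_mul, Real.sin_two_mul]
  nlinarith [Real.sin_sq_add_cos_sq θ]

lemma abs_sin_nat_mul (a : ℕ) (x : ℝ) : |Real.sin ((a:ℝ)*x)| ≤ (a:ℝ) * |Real.sin x| := by
  induction a with
  | zero => simp
  | succ n ih =>
    have e : (((n:ℝ)+1))*x = (n:ℝ)*x + x := by ring
    push_cast
    rw [e, Real.sin_add]
    calc |Real.sin ((n:ℝ)*x) * Real.cos x + Real.cos ((n:ℝ)*x) * Real.sin x|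
        ≤ |Real.sin ((n:ℝ)*x) * Real.cos x| + |Real.cos ((n:ℝ)*x) * Real.sin x| := abs_add_le _ _
      _ ≤ (n:ℝ) * |Real.sin x| + 1 * |Real.sin x| := by
          rw [abs_mul, abs_mul]
          have h1 := Real.abs_cos_le_one x
          have h2 := Real.abs_cos_le_one ((n:ℝ)*x)
          have h3 := abs_nonneg (Real.sin ((n:ℝ)*x))
          have h4 := abs_nonneg (Real.sin x)
          nlinarith [ih]
      _ = ((n:ℝ)+1) * |Real.sin x| := by ring

lemma ae_sin_ne : ∀ᵐ x : ℝ, x ∈ Set.uIoc (0:ℝ) Real.pi → Real.sin x ≠ 0 := by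
  have h0 : (volume : Measure ℝ) {x : ℝ | ¬ x ≠ Real.pi} = 0 := by
    simp [Set.setOf_eq_eq_singleton']
  filter_upwards [MeasureTheory.ae_iff.mpr h0] with x hx hmem
  rw [Set.uIoc_of_le Real.pi_pos.le] at hmem
  have hlt : x < Real.pi := lt_of_le_of_ne hmem.2 hx
  exact ne_of_gt (Real.sin_pos_of_pos_of_lt_pi hmem.1 hlt)

lemma II_of_bounded (f : ℝ → ℝ) (hf : Measurable f) (C : ℝ) (h : ∀ x, |f x| ≤ C) :
    IntervalIntegrable f volume 0 Real.pi := by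
  rw [intervalIntegrable_iff]
  refine MeasureTheory.Integrable.mono' (g := fun _ => C)
    ((MeasureTheory.integrableOn_const_iff).mpr (Or.inr ?_))
    hf.aestronglyMeasurable.restrict
    (Filter.Eventually.of_forall fun x => by simpa using h x)
  rw [Set.uIoc_of_le Real.pi_pos.le]
  exact measure_Ioc_lt_top

lemma intg_h (c : ℕ) : IntervalIntegrable (fun x => Real.sin ((c:ℝ)*x) / Real.sin x) volume 0 Real.pi := by
  apply II_of_bounded _ ((Real.measurable_sin.comp (measurable_id.const_mul _)).div Real.measurable_sin) (c:ℝ)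
  intro x
  rcases eq_or_ne (Real.sin x) 0 with hs | hs
  · simp [hs]
  · show |Real.sin ((c:ℝ)*x) / Real.sin x| ≤ (c:ℝ)
    rw [abs_div, div_le_iff₀ (abs_pos.mpr hs)]
    exact abs_sin_nat_mul c x

lemma intg_f (a : ℕ) : IntervalIntegrable (fun x => Real.sin ((a:ℝ)*x)^2 / Real.sin x^2) volume 0 Real.pi := by
  apply II_of_bounded _ (((Real.measurable_sin.comp (measurable_id.const_mul _)).pow_const 2).div (Real.measurable_sin.pow_const 2)) ((a:ℝ)^2)
  intro x
  rcases eq_or_ne (Real.sin x) 0 with hs | hs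
  · simp [hs]
  · show |Real.sin ((a:ℝ)*x)^2 / Real.sin x^2| ≤ (a:ℝ)^2
    rw [abs_div, div_le_iff₀ (by positivity)]
    have h := abs_sin_nat_mul a x
    calc |Real.sin ((a:ℝ)*x)^2| = |Real.sin ((a:ℝ)*x)|^2 := by rw [abs_pow]
      _ ≤ ((a:ℝ) * |Real.sin x|)^2 := by gcongr
      _ = (a:ℝ)^2 * |Real.sin x^2| := by rw [mul_pow, abs_pow]

lemma intCos (c a b : ℝ) (hc : c ≠ 0) :
    ∫ x in a..b, Real.cos (c*x) = (Real.sin (c*b) - Real.sin (c*a))/c := by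
  rw [integral_comp_mul_left Real.cos hc, integral_cos, smul_eq_mul]
  ring

lemma ptM (c x : ℝ) (hs : Real.sin x ≠ 0) :
    Real.sin ((2*c+3)*x) / Real.sin x = Real.sin ((2*c+1)*x) / Real.sin x + 2 * Real.cos ((2*c+2)*x) := by
  have key := Real.sin_sub_sin ((2*c+3)*x) ((2*c+1)*x)
  rw [show ((2*c+3)*x - (2*c+1)*x)/2 = x by ring, show ((2*c+3)*x + (2*c+1)*x)/2 = (2*c+2)*x by ring] at key
  rw [div_add' _ _ _ hs, div_left_inj' hs]
  linear_combination key

lemma ptL (c x : ℝ) (hs : Real.sin x ≠ 0) :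
    Real.sin ((c+1)*x)^2 / Real.sin x^2 = Real.sin (c*x)^2 / Real.sin x^2 + Real.sin ((2*c+1)*x) / Real.sin x := by
  have key := sin_sq_sub ((c+1)*x) (c*x)
  rw [show (c+1)*x + c*x = (2*c+1)*x by ring, show (c+1)*x - c*x = x by ring] at key
  rw [div_add_div _ _ (pow_ne_zero 2 hs) hs, div_eq_div_iff (pow_ne_zero 2 hs) (mul_ne_zero (pow_ne_zero 2 hs) hs)]
  linear_combination Real.sin x^3 * key

lemma lemM (a : ℕ) : ∫ x in (0:ℝ)..Real.pi, Real.sin (((2*a+1:ℕ):ℝ)*x) / Real.sin x = Real.pi := by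
  induction a with
  | zero =>
    rw [intervalIntegral.integral_congr_ae (g := fun _ => (1:ℝ))
      (by filter_upwards [ae_sin_ne] with x hx hmem
          have := hx hmem
          norm_num [div_self this])]
    simp
  | succ n ih =>
    have hae : ∀ᵐ x : ℝ, x ∈ Set.uIoc (0:ℝ) Real.pi →
        Real.sin (((2*(n+1)+1:ℕ):ℝ)*x) / Real.sin x =
        Real.sin (((2*n+1:ℕ):ℝ)*x) / Real.sin x + 2 * Real.cos (((2*n+2:ℕ):ℝ)*x) := by
      filter_upwards [ae_sin_ne] with x hx hmem
      have hs := hx hmem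
      push_cast
      rw [show (2*((n:ℝ)+1)+1) = 2*(n:ℝ)+3 by ring]
      exact ptM (n:ℝ) x hs
    rw [intervalIntegral.integral_congr_ae hae,
      intervalIntegral.integral_add (intg_h (2*n+1))
        ((by fun_prop : Continuous fun x => 2 * Real.cos (((2*n+2:ℕ):ℝ)*x)).intervalIntegrable _ _),
      ih, intervalIntegral.integral_const_mul, intCos _ _ _ (by positivity : (((2*n+2:ℕ):ℝ)) ≠ 0)]
    have hz : Real.sin ((2*(n:ℝ)+2) * Real.pi) = 0 := by
      rw [show (2*(n:ℝ)+2) = ((2*n+2:ℕ):ℝ) by push_cast; ring]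
      exact Real.sin_nat_mul_pi _
    simp [hz]

lemma lemL (a : ℕ) : ∫ x in (0:ℝ)..Real.pi, Real.sin ((a:ℝ)*x)^2 / Real.sin x^2 = (a:ℝ) * Real.pi := by
  induction a with
  | zero => simp
  | succ n ih =>
    have hae : ∀ᵐ x : ℝ, x ∈ Set.uIoc (0:ℝ) Real.pi →
        Real.sin (((n+1:ℕ):ℝ)*x)^2 / Real.sin x^2 =
        Real.sin ((n:ℝ)*x)^2 / Real.sin x^2 + Real.sin (((2*n+1:ℕ):ℝ)*x) / Real.sin x := by
      filter_upwards [ae_sin_ne] with x hx hmem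
      have hs := hx hmem
      push_cast
      exact ptL (n:ℝ) x hs
    rw [intervalIntegral.integral_congr_ae hae,
      intervalIntegral.integral_add (intg_f n) (intg_h (2*n+1)), ih, lemM n]
    push_cast
    ring

lemma lemJm (a : ℕ) : ∫ x in (0:ℝ)..Real.pi, Real.sin ((a:ℝ)*x)^4 / Real.sin x^2
    = (a:ℝ) * Real.pi / 2 := by
  have hae : ∀ᵐ x : ℝ, x ∈ Set.uIoc (0:ℝ) Real.pi →
      Real.sin ((a:ℝ)*x)^4 / Real.sin x^2 =
      Real.sin ((a:ℝ)*x)^2 / Real.sin x^2 - (1/4) * (Real.sin (((2*a:ℕ):ℝ)*x)^2 / Real.sin x^2) := by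
    filter_upwards [ae_sin_ne] with x hx hmem
    have hs := hx hmem
    have key := sin_pow_four ((a:ℝ)*x)
    rw [show ((2*a:ℕ):ℝ)*x = 2*((a:ℝ)*x) by push_cast; ring]
    linear_combination (1 / Real.sin x^2) * key
  rw [intervalIntegral.integral_congr_ae hae,
    intervalIntegral.integral_sub (intg_f a) ((intg_f (2*a)).const_mul (1/4)),
    intervalIntegral.integral_const_mul, lemL a, lemL (2*a)]
  push_cast
  ring

lemma lemJz (a : ℕ) : ∫ x in (0:ℝ)..Real.pi,
    Real.sin ((a:ℝ)*x)^3 * Real.sin (((3*a:ℕ):ℝ)*x) / Real.sin x^2 = 0 := by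
  have hae : ∀ᵐ x : ℝ, x ∈ Set.uIoc (0:ℝ) Real.pi →
      Real.sin ((a:ℝ)*x)^3 * Real.sin (((3*a:ℕ):ℝ)*x) / Real.sin x^2 =
      (3/4) * (Real.sin (((2*a:ℕ):ℝ)*x)^2 / Real.sin x^2)
        - (3/4) * (Real.sin ((a:ℝ)*x)^2 / Real.sin x^2)
        - (1/4) * (Real.sin (((3*a:ℕ):ℝ)*x)^2 / Real.sin x^2) := by
    filter_upwards [ae_sin_ne] with x hx hmem
    have hs := hx hmem
    have key := sin_cube_mul ((a:ℝ)*x)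
    rw [show ((2*a:ℕ):ℝ)*x = 2*((a:ℝ)*x) by push_cast; ring,
      show ((3*a:ℕ):ℝ)*x = 3*((a:ℝ)*x) by push_cast; ring]
    linear_combination (1 / Real.sin x^2) * key
  rw [intervalIntegral.integral_congr_ae hae,
    intervalIntegral.integral_sub (((intg_f (2*a)).const_mul (3/4)).sub ((intg_f a).const_mul (3/4)))
      ((intg_f (3*a)).const_mul (1/4)),
    intervalIntegral.integral_sub ((intg_f (2*a)).const_mul (3/4)) ((intg_f a).const_mul (3/4)),
    intervalIntegral.integral_const_mul, intervalIntegral.integral_const_mul,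
    intervalIntegral.integral_const_mul, lemL a, lemL (2*a), lemL (3*a)]
  push_cast
  ring

lemma cosOrth (p q : ℕ) (hq : q ≠ 0) :
    ∫ t in (0:ℝ)..(2*Real.pi), Real.cos ((p:ℝ)*t) * Real.cos ((q:ℝ)*t)
      = if p = q then Real.pi else 0 := by
  have key : ∀ t:ℝ, Real.cos ((p:ℝ)*t) * Real.cos ((q:ℝ)*t)
      = (1/2) * Real.cos (((p+q:ℕ):ℝ)*t) + (1/2) * Real.cos (((p:ℝ)-(q:ℝ))*t) := by
    intro t
    rw [show (((p+q:ℕ):ℝ))*t = (p:ℝ)*t + (q:ℝ)*t by push_cast; ring,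
      show (((p:ℝ)-(q:ℝ)))*t = (p:ℝ)*t - (q:ℝ)*t by ring, Real.cos_add, Real.cos_sub]
    ring
  simp only [key]
  rw [intervalIntegral.integral_add
      (((by fun_prop : Continuous fun t => Real.cos (((p+q:ℕ):ℝ)*t)).intervalIntegrable _ _).const_mul _)
      (((by fun_prop : Continuous fun t => Real.cos (((p:ℝ)-(q:ℝ))*t)).intervalIntegrable _ _).const_mul _),
    intervalIntegral.integral_const_mul, intervalIntegral.integral_const_mul]
  have hpq : (((p+q:ℕ):ℝ)) ≠ 0 := by
    have : p + q ≠ 0 := by omega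
    exact_mod_cast Nat.cast_ne_zero.mpr this
  have h1 : ∫ t in (0:ℝ)..(2*Real.pi), Real.cos (((p+q:ℕ):ℝ)*t) = 0 := by
    rw [intCos _ _ _ hpq, show ((p+q:ℕ):ℝ) * (2*Real.pi) = ((2*(p+q):ℕ):ℝ) * Real.pi by push_cast; ring,
      Real.sin_nat_mul_pi]
    simp
  rw [h1]
  by_cases hpq2 : p = q
  · subst hpq2
    simp only [sub_self, zero_mul, Real.cos_zero, if_pos rfl]
    rw [intervalIntegral.integral_const]
    simp
    try ring
  · have hne : (p:ℝ) - (q:ℝ) ≠ 0 := by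
      rw [sub_ne_zero]
      exact_mod_cast hpq2
    have h2 : ∫ t in (0:ℝ)..(2*Real.pi), Real.cos (((p:ℝ)-(q:ℝ))*t) = 0 := by
      rw [intCos _ _ _ hne,
        show ((p:ℝ)-(q:ℝ)) * (2*Real.pi) = ((2*((p:ℤ)-(q:ℤ)):ℤ):ℝ) * Real.pi by push_cast; ring,
        Real.sin_int_mul_pi]
      simp
    rw [h2, if_neg hpq2]
    simp

/-- `v̄_m(t,x) = α_m cos(ω_m t) e_m(x)` with `α_m² = 4ω_m/3` solves the
resonant system `A v = Π_V(v³)`: componentwise, for every `j`, the projection coefficient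
of `v̄_m³` on `cos(ω_j t) e_j(x)` equals the corresponding coefficient `α_m ω_m²` of
`A v̄_m` if `j = m`, and `0` otherwise. -/
theorem stmt8 (m : ℕ) (α : ℝ) (hα : α ^ 2 = 4 * ((m : ℝ) + 1) / 3) (j : ℕ) :
    (1 / Real.pi) * ∫ t in (0:ℝ)..(2 * Real.pi),
        Real.cos (((j : ℝ) + 1) * t) *
          ((2 / Real.pi) * ∫ x in (0:ℝ)..Real.pi,
            (α * Real.cos (((m : ℝ) + 1) * t) * sphEig m x) ^ 3 * sphEig j x *
              Real.sin x ^ 2) =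
      if j = m then α * ((m : ℝ) + 1) ^ 2 else 0 := by
  have hπ : Real.pi ≠ 0 := Real.pi_ne_zero
  have inner : ∀ t : ℝ,
      (∫ x in (0:ℝ)..Real.pi,
        (α * Real.cos (((m:ℝ)+1)*t) * sphEig m x) ^ 3 * sphEig j x * Real.sin x ^ 2)
      = (α * Real.cos (((m:ℝ)+1)*t))^3 *
          ∫ x in (0:ℝ)..Real.pi, sphEig m x ^ 3 * sphEig j x * Real.sin x ^ 2 := by
    intro t
    rw [← intervalIntegral.integral_const_mul]
    apply intervalIntegral.integral_congr
    intro x _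
    ring
  simp only [inner]
  set C := ∫ x in (0:ℝ)..Real.pi, sphEig m x ^ 3 * sphEig j x * Real.sin x ^ 2 with hC
  have step2 : ∀ t:ℝ, Real.cos (((j:ℝ)+1)*t) * ((2/Real.pi) * ((α * Real.cos (((m:ℝ)+1)*t))^3 * C))
      = ((2/Real.pi) * α^3 * C) * (Real.cos (((j:ℝ)+1)*t) * Real.cos (((m:ℝ)+1)*t)^3) := by
    intro t; ring
  simp only [step2]
  rw [intervalIntegral.integral_const_mul]
  set T := ∫ t in (0:ℝ)..(2*Real.pi), Real.cos (((j:ℝ)+1)*t) * Real.cos (((m:ℝ)+1)*t)^3 with hT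
  -- compute T
  have O1 : ∫ t in (0:ℝ)..(2*Real.pi), Real.cos (((j:ℝ)+1)*t) * Real.cos (((m:ℝ)+1)*t)
      = if j = m then Real.pi else 0 := by
    have h := cosOrth (j+1) (m+1) (by omega)
    have hiff : (j+1 = m+1) ↔ (j = m) := by omega
    rw [if_congr hiff rfl rfl] at h
    push_cast at h
    exact h
  have O2 : ∫ t in (0:ℝ)..(2*Real.pi), Real.cos (((j:ℝ)+1)*t) * Real.cos ((3*((m:ℝ)+1))*t)
      = if j = 3*m+2 then Real.pi else 0 := by
    have h := cosOrth (j+1) (3*(m+1)) (by omega)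
    have hiff : (j+1 = 3*(m+1)) ↔ (j = 3*m+2) := by omega
    rw [if_congr hiff rfl rfl] at h
    push_cast at h
    exact h
  have hTval : T = (3/4) * (if j = m then Real.pi else 0)
      + (1/4) * (if j = 3*m+2 then Real.pi else 0) := by
    rw [hT]
    have e : ∀ t:ℝ, Real.cos (((j:ℝ)+1)*t) * Real.cos (((m:ℝ)+1)*t)^3
        = (3/4) * (Real.cos (((j:ℝ)+1)*t) * Real.cos (((m:ℝ)+1)*t))
          + (1/4) * (Real.cos (((j:ℝ)+1)*t) * Real.cos ((3*((m:ℝ)+1))*t)) := by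
      intro t
      have h3 := Real.cos_three_mul (((m:ℝ)+1)*t)
      rw [show (3*((m:ℝ)+1))*t = 3*(((m:ℝ)+1)*t) by ring]
      linear_combination (-Real.cos (((j:ℝ)+1)*t)/4) * h3
    simp only [e]
    rw [intervalIntegral.integral_add
        (((by fun_prop : Continuous fun t => Real.cos (((j:ℝ)+1)*t) * Real.cos (((m:ℝ)+1)*t)).intervalIntegrable _ _).const_mul _)
        (((by fun_prop : Continuous fun t => Real.cos (((j:ℝ)+1)*t) * Real.cos ((3*((m:ℝ)+1))*t)).intervalIntegrable _ _).const_mul _),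
      intervalIntegral.integral_const_mul, intervalIntegral.integral_const_mul, O1, O2]
  by_cases hjm : j = m
  · subst hjm
    rw [if_pos rfl]
    have hj3 : ¬ (j = 3*j+2) := by omega
    rw [if_pos rfl, if_neg hj3] at hTval
    have hCval : C = ((j:ℝ)+1) * Real.pi / 2 := by
      rw [hC, intervalIntegral.integral_congr_ae
        (g := fun x => Real.sin (((j+1:ℕ):ℝ)*x)^4 / Real.sin x^2)
        (by filter_upwards [ae_sin_ne] with x hx hmem
            have hs := hx hmem
            unfold sphEig
            push_cast
            field_simp), lemJm (j+1)]
      push_cast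
      ring
    rw [hTval, hCval]
    have hα3 : α^3 = α * (4*((j:ℝ)+1)/3) := by rw [← hα]; ring
    rw [hα3]
    field_simp
    ring
  · rw [if_neg hjm]
    by_cases hj3 : j = 3*m+2
    · have hCval : C = 0 := by
        rw [hC, intervalIntegral.integral_congr_ae
          (g := fun x => Real.sin (((m+1:ℕ):ℝ)*x)^3 * Real.sin (((3*(m+1):ℕ):ℝ)*x) / Real.sin x^2)
          (by filter_upwards [ae_sin_ne] with x hx hmem
              have hs := hx hmem
              unfold sphEig
              subst hj3
              push_cast
              field_simp
              ring)]
        exact lemJz (m+1)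
      rw [hCval]
      ring
    · rw [if_neg hjm, if_neg hj3] at hTval
      rw [hTval]
      ring
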